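/- The group G generated by involutions g₀, g₁ and elements h(x) for x ∈ X subject to the relations (R1)–(R3) and the g-relations is locally finite: every finitely generated subgroup of G is finite. In particular G is amenable. -/

import Mathlib

/-- A discrete group is amenable if there is a left-invariant, finitely additive
probability measure defined on all subsets of the group. -/
def IsAmenable (G : Type*) [Group G] : Prop :=
  ∃ μ : Set G → ℝ, (∀ A : Set G, 0 ≤ μ A) ∧ μ Set.univ = 1 ∧
    (∀ A B : Set G, Disjoint A B → μ (A ∪ B) = μ A + μ B) ∧
    (∀ (g : G) (A : Set G), μ ((g * ·) '' A) = μ A)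

namespace ExampleGroup

/-- A pair `(i, j) ∈ {0,1}²`, with `0 = false`, `1 = true`. -/
abbrev Pair := Bool × Bool

/-- The index set `X`: non-empty sequences of pairs `(i₁,j₁,…,i_n,j_n)` such that
`(j_k, i_{k+1}, j_{k+1}) ∉ {(0,0,1), (1,0,0)}` for all `k`. -/
def Valid (l : List Pair) : Prop :=
  l ≠ [] ∧ l.Chain' (fun p q =>
    ¬((p.2 = false ∧ q.1 = false ∧ q.2 = true) ∨ (p.2 = true ∧ q.1 = false ∧ q.2 = false)))

def X : Type := {l : List Pair // Valid l}

/-- The relations of the group `H̲` on the generators `h(x)`, `x ∈ X`: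
(R1) `h(x)² = 1`; (R2) generators of equal length commute; (R3) conjugating
`h(x)` by `h(x')` with `ℓ(x') = k < ℓ(x)` flips `i_{k+1}` exactly when `x'` is the
length-`k` prefix of `x` and `j_k = j_{k+1}`, and fixes `h(x)` otherwise. -/
def relsH : Set (FreeGroup X) :=
  {w | ∃ x : X, w = FreeGroup.of x * FreeGroup.of x} ∪
  {w | ∃ x y : X, x.1.length = y.1.length ∧
      w = FreeGroup.of x * FreeGroup.of y * (FreeGroup.of x)⁻¹ * (FreeGroup.of y)⁻¹} ∪
  {w | ∃ (p x x' : X) (i j : Bool) (rest : List Pair) (hne : p.1 ≠ []),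
      x.1 = p.1 ++ (i, j) :: rest ∧ x'.1 = p.1 ++ (!i, j) :: rest ∧
      (p.1.getLast hne).2 = j ∧
      w = FreeGroup.of p * FreeGroup.of x * (FreeGroup.of p)⁻¹ * (FreeGroup.of x')⁻¹} ∪
  {w | ∃ (p x : X), p.1.length < x.1.length ∧
      ¬(∃ (i j : Bool) (rest : List Pair) (hne : p.1 ≠ []),
          x.1 = p.1 ++ (i, j) :: rest ∧ (p.1.getLast hne).2 = j) ∧
      w = FreeGroup.of p * FreeGroup.of x * (FreeGroup.of p)⁻¹ * (FreeGroup.of x)⁻¹}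

/-- The relations of the group `G = ⟨H̲, g₀, g₁⟩`: those of `H̲`, together with
`g₀² = g₁² = 1`, `g₀g₁ = g₁g₀`, `g_j` commutes with `h(i, j⊕1, …)`, and
`g_j h(i, j, …) g_j = h(i⊕1, j, …)`. -/
def relsG : Set (FreeGroup (X ⊕ Bool)) :=
  (⇑(FreeGroup.map (Sum.inl : X → X ⊕ Bool)) '' relsH) ∪
  {w | ∃ j : Bool, w = FreeGroup.of (Sum.inr j) * FreeGroup.of (Sum.inr j)} ∪
  {w | w = FreeGroup.of (Sum.inr false) * FreeGroup.of (Sum.inr true) *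
      (FreeGroup.of (Sum.inr false))⁻¹ * (FreeGroup.of (Sum.inr true))⁻¹} ∪
  {w | ∃ (j i : Bool) (rest : List Pair) (x : X), x.1 = (i, !j) :: rest ∧
      w = FreeGroup.of (Sum.inr j) * FreeGroup.of (Sum.inl x) *
        (FreeGroup.of (Sum.inr j))⁻¹ * (FreeGroup.of (Sum.inl x))⁻¹} ∪
  {w | ∃ (j i : Bool) (rest : List Pair) (x x' : X),
      x.1 = (i, j) :: rest ∧ x'.1 = (!i, j) :: rest ∧
      w = FreeGroup.of (Sum.inr j) * FreeGroup.of (Sum.inl x) *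
        (FreeGroup.of (Sum.inr j))⁻¹ * (FreeGroup.of (Sum.inl x'))⁻¹}

end ExampleGroup
open ExampleGroup

namespace LF

/-- The chain relation used in `Valid`. -/
abbrev Rel : Pair → Pair → Prop := fun p q =>
  ¬((p.2 = false ∧ q.1 = false ∧ q.2 = true) ∨ (p.2 = true ∧ q.1 = false ∧ q.2 = false))

lemma valid_iff (l : List Pair) : Valid l ↔ l ≠ [] ∧ l.Chain' Rel := Iff.rfl

instance : DecidableEq X := fun a b => decidable_of_iff (a.1 = b.1) Subtype.ext_iff.symm

lemma rel_of_snd (x : Pair) (i j : Bool) (h : x.2 = j) : Rel x (i, j) := by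
  rcases j <;> simp [Rel, h]

lemma rel_fst_irrel (i i' j : Bool) (y : Pair) : Rel (i, j) y ↔ Rel (i', j) y := by
  simp [Rel]

/-- Flipping the `i`-component right after a prefix whose last `j` matches preserves validity. -/
lemma valid_flip {q rest : List Pair} {i i' j : Bool}
    (hj : ∀ x ∈ q.getLast?, Prod.snd x = j)
    (h : Valid (q ++ (i, j) :: rest)) : Valid (q ++ (i', j) :: rest) := by
  rcases h with ⟨-, hc⟩
  refine ⟨by simp, ?_⟩
  unfold List.Chain' at hc ⊢
  rw [List.isChain_append] at hc ⊢
  refine ⟨hc.1, ?_, ?_⟩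
  · have h2 := hc.2.1
    rw [List.isChain_cons] at h2 ⊢
    exact ⟨fun y hy => (rel_fst_irrel i i' j y).1 (h2.1 y hy), h2.2⟩
  · intro x hx y hy
    simp only [List.head?_cons, Option.mem_def, Option.some.injEq] at hy
    subst hy
    exact rel_of_snd x i' j (hj x hx)

end LF
namespace LF

/-- Conjugation walk, carrying the last `j`-coordinate seen so far. -/
def conjA (j : Bool) : List Pair → List Pair → List Pair
  | [], [] => []
  | [], b :: p => if b.2 = j then (!b.1, b.2) :: p else b :: p
  | _ :: _, [] => []
  | a :: q, b :: p => if a = b then b :: conjA a.2 q p else b :: p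

/-- `conjL q p` is the result of conjugating `h p` by `h q` (for `q` shorter than `p`). -/
def conjL : List Pair → List Pair → List Pair
  | [], p => p
  | _ :: _, [] => []
  | a :: q, b :: p => if a = b then b :: conjA a.2 q p else b :: p

def lastJ (j : Bool) (q : List Pair) : Bool := ((q.getLast?).map Prod.snd).getD j

@[simp] lemma lastJ_nil (j : Bool) : lastJ j [] = j := rfl

lemma lastJ_cons (j : Bool) (a : Pair) (q : List Pair) : lastJ j (a :: q) = lastJ a.2 q := by
  cases q with
  | nil => rfl
  | cons b q' =>
    simp [lastJ, List.getLast?_cons_cons, List.getLast?_eq_getLast (l := b :: q') (by simp)]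

lemma lastJ_ne_nil (j : Bool) (q : List Pair) (hq : q ≠ []) :
    lastJ j q = (q.getLast hq).2 := by
  simp [lastJ, List.getLast?_eq_getLast hq]

lemma conjA_spec (j : Bool) (q p : List Pair) (h : q.length < p.length) :
    (conjA j q p = p ∧ ¬∃ i j' rest, p = q ++ (i, j') :: rest ∧ lastJ j q = j') ∨
    (∃ i j' rest, p = q ++ (i, j') :: rest ∧ lastJ j q = j' ∧
      conjA j q p = q ++ (!i, j') :: rest) := by
  induction q generalizing j p with
  | nil =>
    cases p with
    | nil => simp at h
    | cons b p' =>
      by_cases hj : b.2 = j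
      · right
        exact ⟨b.1, b.2, p', by simp, by simp [hj], by simp [conjA, hj]⟩
      · left
        refine ⟨by simp [conjA, hj], ?_⟩
        rintro ⟨i, j', rest, hp, hl⟩
        simp only [List.nil_append, List.cons.injEq] at hp
        simp only [lastJ_nil] at hl
        exact hj (by rw [hp.1, ← hl])
  | cons a q' ih =>
    cases p with
    | nil => simp at h
    | cons b p' =>
      by_cases hab : a = b
      · subst hab
        rcases ih a.2 p' (by simpa using h) with ⟨h1, h2⟩ | ⟨i, j', rest, h1, h2, h3⟩
        · left
          refine ⟨by simp [conjA, h1], ?_⟩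
          rintro ⟨i, j', rest, hp, hl⟩
          simp only [List.cons_append, List.cons.injEq, true_and] at hp
          exact h2 ⟨i, j', rest, hp, by rwa [lastJ_cons] at hl⟩
        · right
          refine ⟨i, j', rest, by simp [h1], by rwa [lastJ_cons], by simp [conjA, h3]⟩
      · left
        refine ⟨by simp [conjA, hab], ?_⟩
        rintro ⟨i, j', rest, hp, hl⟩
        simp only [List.cons_append, List.cons.injEq] at hp
        exact hab hp.1.symm

lemma conjL_eq_conjA (j : Bool) (q p : List Pair) (hq : q ≠ []) :
    conjL q p = conjA j q p := by
  cases q with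
  | nil => exact absurd rfl hq
  | cons a q' => cases p with
    | nil => rfl
    | cons b p' => rfl

lemma conjL_spec (q p : List Pair) (hq : q ≠ []) (h : q.length < p.length) :
    (conjL q p = p ∧ ¬∃ i j' rest, p = q ++ (i, j') :: rest ∧ (q.getLast hq).2 = j') ∨
    (∃ i j' rest, p = q ++ (i, j') :: rest ∧ (q.getLast hq).2 = j' ∧
      conjL q p = q ++ (!i, j') :: rest) := by
  have := conjA_spec false q p h
  rw [← conjL_eq_conjA false q p hq] at this
  rw [← lastJ_ne_nil false q hq]
  exact this

lemma conjL_length (q p : List Pair) (hq : q ≠ []) (h : q.length < p.length) :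
    (conjL q p).length = p.length := by
  rcases conjL_spec q p hq h with ⟨h1, -⟩ | ⟨i, j', rest, h1, -, h3⟩
  · rw [h1]
  · rw [h3, h1]; simp

lemma valid_conjL (q p : List Pair) (hq : q ≠ []) (h : q.length < p.length)
    (hp : Valid p) : Valid (conjL q p) := by
  rcases conjL_spec q p hq h with ⟨h1, -⟩ | ⟨i, j', rest, h1, h2, h3⟩
  · rwa [h1]
  · rw [h3]
    refine valid_flip ?_ (h1 ▸ hp)
    intro x hx
    rw [List.getLast?_eq_getLast hq] at hx
    simp only [Option.mem_def, Option.some.injEq] at hx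
    rw [← hx]; exact h2

def gconjL (j : Bool) : List Pair → List Pair
  | [] => []
  | b :: p => if b.2 = j then (!b.1, b.2) :: p else b :: p

lemma gconjL_length (j : Bool) (p : List Pair) : (gconjL j p).length = p.length := by
  cases p with
  | nil => rfl
  | cons b p' => by_cases h : b.2 = j <;> simp [gconjL, h]

lemma valid_gconjL (j : Bool) (p : List Pair) (hp : Valid p) : Valid (gconjL j p) := by
  cases p with
  | nil => exact hp
  | cons b p' =>
    by_cases h : b.2 = j
    · have : Valid ([] ++ (b.1, b.2) :: p') := by simpa using hp
      have := valid_flip (i' := !b.1) (by simp) this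
      simpa [gconjL, h] using this
    · simpa [gconjL, h] using hp

end LF
namespace LF

def conjX (q p : X) : X :=
  if h : q.1.length < p.1.length then
    ⟨conjL q.1 p.1, valid_conjL q.1 p.1 q.2.1 h p.2⟩
  else p

lemma conjX_coe (q p : X) (h : q.1.length < p.1.length) :
    (conjX q p).1 = conjL q.1 p.1 := by simp [conjX, h]

lemma conjX_length (q p : X) : (conjX q p).1.length = p.1.length := by
  by_cases h : q.1.length < p.1.length
  · rw [conjX_coe q p h]; exact conjL_length q.1 p.1 q.2.1 h
  · have hX : conjX q p = p := by simp [conjX, h]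
    rw [hX]

def gconjX (j : Bool) (x : X) : X := ⟨gconjL j x.1, valid_gconjL j x.1 x.2⟩

lemma gconjX_length (j : Bool) (x : X) : (gconjX j x).1.length = x.1.length :=
  gconjL_length j x.1

abbrev GG := PresentedGroup relsG

def Hg (x : X) : GG := PresentedGroup.mk relsG (FreeGroup.of (Sum.inl x))

def Gg (j : Bool) : GG := PresentedGroup.mk relsG (FreeGroup.of (Sum.inr j))

lemma rel_one {w : FreeGroup (X ⊕ Bool)} (hw : w ∈ relsG) :
    PresentedGroup.mk relsG w = 1 :=
  (QuotientGroup.eq_one_iff w).2 (Subgroup.subset_normalClosure hw)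

lemma comm_of {a b c : GG} (h : a * b * a⁻¹ * c⁻¹ = 1) : a * b = c * a := by
  rw [mul_inv_eq_one] at h
  rw [← h]
  group

lemma hrel (v : FreeGroup X) (hv : v ∈ relsH) :
    PresentedGroup.mk relsG (FreeGroup.map Sum.inl v) = 1 :=
  rel_one (Or.inl (Or.inl (Or.inl (Or.inl ⟨v, hv, rfl⟩))))

lemma Hg_mul_self (x : X) : Hg x * Hg x = 1 := by
  have h := hrel _ (Or.inl (Or.inl (Or.inl ⟨x, rfl⟩)))
  simpa [map_mul, Hg] using h

lemma Hg_comm {x y : X} (h : x.1.length = y.1.length) : Hg x * Hg y = Hg y * Hg x := by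
  have h2 := hrel _ (Or.inl (Or.inl (Or.inr ⟨x, y, h, rfl⟩)))
  have h3 : Hg x * Hg y * (Hg x)⁻¹ * (Hg y)⁻¹ = 1 := by
    simpa [map_mul, map_inv, Hg] using h2
  exact (comm_of h3).symm ▸ (comm_of h3)

lemma hmove (p q : X) (hlen : q.1.length < p.1.length) :
    Hg p * Hg q = Hg q * Hg (conjX q p) := by
  have hqne : q.1 ≠ [] := q.2.1
  have hcoe : (conjX q p).1 = conjL q.1 p.1 := conjX_coe q p hlen
  rcases conjL_spec q.1 p.1 hqne hlen with ⟨h1, h2⟩ | ⟨i, j', rest, h1, h2, h3⟩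
  · have hX : conjX q p = p := Subtype.ext (by rw [hcoe, h1])
    have hmem : _ ∈ relsH := Or.inr ⟨q, p, hlen, by
      rintro ⟨i, j, rest, hne, hp, hl⟩
      exact h2 ⟨i, j, rest, hp, hl⟩, rfl⟩
    have h4 := hrel _ hmem
    have h5 : Hg q * Hg p * (Hg q)⁻¹ * (Hg p)⁻¹ = 1 := by
      simpa [map_mul, map_inv, Hg] using h4
    rw [hX]
    exact (comm_of h5).symm
  · have hmem : _ ∈ relsH := Or.inl (Or.inr ⟨q, conjX q p, p, !i, j', rest, hqne,
      by rw [hcoe, h3], by rw [h1, Bool.not_not], h2, rfl⟩)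
    have h4 := hrel _ hmem
    have h5 : Hg q * Hg (conjX q p) * (Hg q)⁻¹ * (Hg p)⁻¹ = 1 := by
      simpa [map_mul, map_inv, Hg] using h4
    exact (comm_of h5).symm

lemma Gg_mul_self (j : Bool) : Gg j * Gg j = 1 := by
  have h := rel_one (Or.inl (Or.inl (Or.inl (Or.inr ⟨j, rfl⟩))))
  simpa [map_mul, Gg] using h

lemma Gg_comm : Gg false * Gg true = Gg true * Gg false := by
  have h := rel_one (Or.inl (Or.inl (Or.inr rfl)))
  have h5 : Gg false * Gg true * (Gg false)⁻¹ * (Gg true)⁻¹ = 1 := by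
    simpa [map_mul, map_inv, Gg] using h
  exact comm_of h5

lemma gmove (j : Bool) (x : X) : Hg x * Gg j = Gg j * Hg (gconjX j x) := by
  obtain ⟨l, hl⟩ := x
  cases l with
  | nil => exact absurd rfl hl.1
  | cons b rest =>
    by_cases hj : b.2 = j
    · have hx1 : (gconjX j ⟨b :: rest, hl⟩).1 = (!b.1, j) :: rest := by
        simp [gconjX, gconjL, hj]
      have hx2 : (⟨b :: rest, hl⟩ : X).1 = (!(!b.1), j) :: rest := by
        simp [Bool.not_not, ← hj]
      have hmem : _ ∈ relsG := Or.inr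
        ⟨j, !b.1, rest, gconjX j ⟨b :: rest, hl⟩, ⟨b :: rest, hl⟩, hx1, hx2, rfl⟩
      have h4 := rel_one hmem
      have h5 : Gg j * Hg (gconjX j ⟨b :: rest, hl⟩) * (Gg j)⁻¹ *
          (Hg ⟨b :: rest, hl⟩)⁻¹ = 1 := by
        simpa [map_mul, map_inv, Gg, Hg] using h4
      exact (comm_of h5).symm
    · have hb2 : b.2 = !j := by
        cases hbv : b.2 <;> cases j <;> simp_all
      have hx1 : (⟨b :: rest, hl⟩ : X).1 = (b.1, !j) :: rest := by
        simp [← hb2]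
      have hmem : _ ∈ relsG := Or.inl (Or.inr ⟨j, b.1, rest, ⟨b :: rest, hl⟩, hx1, rfl⟩)
      have h4 := rel_one hmem
      have h5 : Gg j * Hg ⟨b :: rest, hl⟩ * (Gg j)⁻¹ * (Hg ⟨b :: rest, hl⟩)⁻¹ = 1 := by
        simpa [map_mul, map_inv, Gg, Hg] using h4
      have hfix : gconjX j ⟨b :: rest, hl⟩ = ⟨b :: rest, hl⟩ := by
        apply Subtype.ext
        simp [gconjX, gconjL, hj]
      rw [hfix]
      exact (comm_of h5).symm

end LF
namespace LF

def wprod (l : List (X × Bool)) : GG := (l.map fun y => if y.2 then Hg y.1 else 1).prod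

@[simp] lemma wprod_nil : wprod [] = 1 := rfl

@[simp] lemma wprod_cons (x : X) (b : Bool) (l : List (X × Bool)) :
    wprod ((x, b) :: l) = (if b then Hg x else 1) * wprod l := rfl

def act (p : X) : List (X × Bool) → List (X × Bool)
  | [] => []
  | (x, b) :: l =>
    if x = p then (x, !b) :: l
    else (x, b) :: act (if b ∧ x.1.length < p.1.length then conjX x p else p) l

lemma act_map_fst (p : X) (l : List (X × Bool)) :
    (act p l).map Prod.fst = l.map Prod.fst := by
  induction l generalizing p with
  | nil => rfl
  | cons yb l ih =>
    obtain ⟨x, b⟩ := yb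
    by_cases hxp : x = p
    · simp [act, hxp]
    · simp [act, hxp, ih]

lemma walk (l : List (X × Bool)) : ∀ p : X,
    List.Pairwise (fun y z : X × Bool => y.1.1.length ≤ z.1.1.length) l →
    p ∈ l.map Prod.fst →
    (∀ q : X, q.1.length = p.1.length →
        (∃ y ∈ l, y.1.1.length < p.1.length) → q ∈ l.map Prod.fst) →
    Hg p * wprod l = wprod (act p l) := by
  induction l with
  | nil => intro p _ hmem _; simp at hmem
  | cons yb l ih =>
    obtain ⟨x, b⟩ := yb
    intro p hsort hmem hinv
    rw [List.pairwise_cons] at hsort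
    by_cases hxp : x = p
    · subst hxp
      cases b with
      | true =>
        simp only [act, if_pos rfl, wprod_cons, if_pos, Bool.not_true, if_true]
        rw [← mul_assoc, Hg_mul_self, one_mul]
        simp
      | false =>
        simp only [act, if_pos rfl, wprod_cons, Bool.not_false]
        simp
    · rcases lt_trichotomy x.1.length p.1.length with hlt | heq | hgt
      · have hall : ∀ q : X, q.1.length = p.1.length → q ∈ l.map Prod.fst := by
          intro q hq
          have h := hinv q hq ⟨(x, b), by simp, hlt⟩
          simp only [List.map_cons, List.mem_cons] at h
          rcases h with h | h
          · exfalso; rw [h] at hq; omega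
          · exact h
        have hsort' : List.Pairwise (fun y z : X × Bool => y.1.1.length ≤ z.1.1.length) l :=
          hsort.2
        cases b with
        | false =>
          have hstep : act p ((x, false) :: l) = (x, false) :: act p l := by
            simp [act, hxp]
          rw [hstep, wprod_cons, wprod_cons]
          simp only [if_neg (Bool.false_ne_true), one_mul]
          rw [← one_mul (wprod l), ← mul_assoc, mul_one]
          exact ih p hsort' (hall p rfl) (fun q hq _ => hall q hq)
        | true =>
          have hstep : act p ((x, true) :: l) = (x, true) :: act (conjX x p) l := by
            simp [act, hxp, hlt]
          rw [hstep, wprod_cons, wprod_cons, if_pos rfl]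
          rw [← mul_assoc, hmove p x hlt, mul_assoc]
          congr 1
          have hlen := conjX_length x p
          exact ih (conjX x p) hsort' (hall _ hlen)
            (fun q hq _ => hall q (by rw [hq, hlen]))
      · have hmem' : p ∈ l.map Prod.fst := by
          simp only [List.map_cons, List.mem_cons] at hmem
          rcases hmem with h | h
          · exact absurd h.symm hxp
          · exact h
        have hinv' : ∀ q : X, q.1.length = p.1.length →
            (∃ y ∈ l, y.1.1.length < p.1.length) → q ∈ l.map Prod.fst := by
          rintro q hq ⟨y, hy, hylen⟩
          have h1 : x.1.length ≤ y.1.1.length := hsort.1 y hy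
          omega
        have hnotlt : ¬(x.1.length < p.1.length) := by omega
        cases b with
        | false =>
          have hstep : act p ((x, false) :: l) = (x, false) :: act p l := by
            simp [act, hxp]
          rw [hstep, wprod_cons, wprod_cons]
          simp only [if_neg (Bool.false_ne_true), one_mul]
          rw [← one_mul (wprod l), ← mul_assoc, mul_one]
          exact ih p hsort.2 hmem' hinv'
        | true =>
          have hstep : act p ((x, true) :: l) = (x, true) :: act p l := by
            simp [act, hxp, hnotlt]
          rw [hstep, wprod_cons, wprod_cons, if_pos rfl]
          rw [← mul_assoc, Hg_comm heq.symm, mul_assoc]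
          congr 1
          exact ih p hsort.2 hmem' hinv'
      · exfalso
        simp only [List.map_cons, List.mem_cons] at hmem
        rcases hmem with h | h
        · exact hxp h.symm
        · obtain ⟨y, hy, hyp⟩ := List.mem_map.1 h
          have h2 : x.1.length ≤ y.1.1.length := hsort.1 y hy
          rw [hyp] at h2
          omega

end LF
namespace LF

def pairsList : List Pair := [(false, false), (false, true), (true, false), (true, true)]

lemma mem_pairsList (p : Pair) : p ∈ pairsList := by
  rcases p with ⟨_ | _, _ | _⟩ <;> simp [pairsList]

def listsLen : ℕ → List (List Pair)
  | 0 => [[]]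
  | k + 1 => (listsLen k).flatMap fun l => pairsList.map fun p => p :: l

lemma mem_listsLen {k : ℕ} (l : List Pair) (h : l.length = k) : l ∈ listsLen k := by
  induction k generalizing l with
  | zero => simp [listsLen, List.length_eq_zero_iff.1 h]
  | succ k ih =>
    cases l with
    | nil => simp at h
    | cons p l' =>
      simp only [List.length_cons, Nat.succ.injEq] at h
      exact List.mem_flatMap.2 ⟨l', ih l' h, List.mem_map.2 ⟨p, mem_pairsList p, rfl⟩⟩

lemma length_of_mem_listsLen {k : ℕ} {l : List Pair} (h : l ∈ listsLen k) : l.length = k := by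
  induction k generalizing l with
  | zero => simp [listsLen] at h; simp [h]
  | succ k ih =>
    obtain ⟨l', hl', hmap⟩ := List.mem_flatMap.1 h
    obtain ⟨p, -, rfl⟩ := List.mem_map.1 hmap
    simp [ih hl']

def Lraw : ℕ → List (List Pair)
  | 0 => []
  | n + 1 => Lraw n ++ listsLen (n + 1)

lemma length_of_mem_Lraw {n : ℕ} {l : List Pair} (h : l ∈ Lraw n) :
    1 ≤ l.length ∧ l.length ≤ n := by
  induction n with
  | zero => simp [Lraw] at h
  | succ n ih =>
    rcases List.mem_append.1 h with h | h
    · have := ih h; omega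
    · have := length_of_mem_listsLen h; omega

lemma mem_Lraw {n : ℕ} (l : List Pair) (h1 : 1 ≤ l.length) (h2 : l.length ≤ n) :
    l ∈ Lraw n := by
  induction n with
  | zero => omega
  | succ n ih =>
    rcases Nat.lt_or_ge l.length (n + 1) with h | h
    · exact List.mem_append.2 (Or.inl (ih (by omega)))
    · exact List.mem_append.2 (Or.inr (mem_listsLen l (by omega)))

lemma pairwise_Lraw (n : ℕ) : (Lraw n).Pairwise (fun a b => a.length ≤ b.length) := by
  induction n with
  | zero => simp [Lraw]
  | succ n ih =>
    rw [Lraw, List.pairwise_append]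
    refine ⟨ih, List.pairwise_of_forall_mem_list ?_, ?_⟩
    · intro a ha b hb
      rw [length_of_mem_listsLen ha, length_of_mem_listsLen hb]
    · intro a ha b hb
      rw [length_of_mem_listsLen hb]
      exact (length_of_mem_Lraw ha).2.trans (by omega)

instance validDecidable : DecidablePred Valid := fun l => by
  unfold Valid List.Chain'; infer_instance

def Ln (n : ℕ) : List X := (Lraw n).filterMap fun l => if h : Valid l then some ⟨l, h⟩ else none

lemma mem_Ln {n : ℕ} (x : X) (h : x.1.length ≤ n) : x ∈ Ln n :=
  List.mem_filterMap.2 ⟨x.1, mem_Lraw x.1 (List.length_pos_iff.2 x.2.1) h, by rw [dif_pos x.2]; rfl⟩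

lemma pairwise_Ln (n : ℕ) : (Ln n).Pairwise (fun a b : X => a.1.length ≤ b.1.length) := by
  refine List.Pairwise.filterMap _ ?_ (pairwise_Lraw n)
  intro a a' hle b hb b' hb'
  split at hb
  · split at hb'
    · obtain rfl := Option.some.inj hb
      obtain rfl := Option.some.inj hb'
      exact hle
    · simp at hb'
  · simp at hb

lemma lengths_le_Ln {n : ℕ} {x : X} (h : x ∈ Ln n) : x.1.length ≤ n := by
  obtain ⟨l, hl, hx⟩ := List.mem_filterMap.1 h
  split at hx
  · obtain rfl := Option.some.inj hx
    exact (length_of_mem_Lraw hl).2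
  · simp at hx

end LF
namespace LF

def Mset (n : ℕ) : Set GG :=
  {g | ∃ (e₀ e₁ : Bool) (l : List (X × Bool)), l.map Prod.fst = Ln n ∧
    g = (if e₀ then Gg false else 1) * (if e₁ then Gg true else 1) * wprod l}

lemma finite_Mset (n : ℕ) : (Mset n).Finite := by
  have h0 : {bs : List Bool | bs.length = (Ln n).length}.Finite :=
    List.finite_length_eq Bool (Ln n).length
  have h1 : {l : List (X × Bool) | l.map Prod.fst = Ln n}.Finite := by
    refine (h0.image fun bs => (Ln n).zip bs).subset ?_
    intro l hl
    refine ⟨l.map Prod.snd, by rw [← hl]; simp, ?_⟩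
    exact (List.zip_of_prod hl rfl).symm
  have h2 : ((Set.univ : Set Bool) ×ˢ (Set.univ : Set Bool) ×ˢ
      {l : List (X × Bool) | l.map Prod.fst = Ln n}).Finite :=
    Set.finite_univ.prod (Set.finite_univ.prod h1)
  refine (h2.image fun t =>
    (if t.1 then Gg false else 1) * (if t.2.1 then Gg true else 1) * wprod t.2.2).subset ?_
  rintro g ⟨e₀, e₁, l, hl, rfl⟩
  exact ⟨(e₀, e₁, l), ⟨trivial, trivial, hl⟩, rfl⟩

lemma wprod_all_false (L : List X) : wprod (L.map fun x => (x, false)) = 1 := by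
  induction L with
  | nil => rfl
  | cons x L ih => simpa using ih

lemma one_mem_Mset (n : ℕ) : 1 ∈ Mset n :=
  ⟨false, false, (Ln n).map fun x => (x, false), by simp [Function.comp_def],
    by simp [wprod_all_false]⟩

lemma gg_swap (e₀ : Bool) :
    Gg true * (if e₀ then Gg false else 1) = (if e₀ then Gg false else 1) * Gg true := by
  cases e₀ <;> simp [Gg_comm.symm]

lemma g_mul_mem {n : ℕ} (j : Bool) {g : GG} (hg : g ∈ Mset n) : Gg j * g ∈ Mset n := by
  obtain ⟨e₀, e₁, l, hl, rfl⟩ := hg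
  cases j with
  | false =>
    refine ⟨!e₀, e₁, l, hl, ?_⟩
    cases e₀ <;> simp [← mul_assoc, Gg_mul_self]
  | true =>
    refine ⟨e₀, !e₁, l, hl, ?_⟩
    rw [← mul_assoc, ← mul_assoc, gg_swap e₀, mul_assoc ((if e₀ then Gg false else 1))]
    cases e₁ <;> simp [← mul_assoc, Gg_mul_self, mul_assoc]

lemma h_mul_mem {n : ℕ} (p : X) (hp : p.1.length ≤ n) {g : GG} (hg : g ∈ Mset n) :
    Hg p * g ∈ Mset n := by
  obtain ⟨e₀, e₁, l, hl, rfl⟩ := hg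
  set p₁ : X := if e₀ then gconjX false p else p with hp₁
  set p₂ : X := if e₁ then gconjX true p₁ else p₁ with hp₂
  have hlen1 : p₁.1.length = p.1.length := by
    rw [hp₁]; split <;> simp [gconjX_length]
  have hlen2 : p₂.1.length = p.1.length := by
    rw [hp₂]; split <;> simp [gconjX_length, hlen1]
  have hs1 : Hg p * (if e₀ then Gg false else 1) = (if e₀ then Gg false else 1) * Hg p₁ := by
    rw [hp₁]; cases e₀ <;> simp [gmove]
  have hs2 : Hg p₁ * (if e₁ then Gg true else 1) = (if e₁ then Gg true else 1) * Hg p₂ := by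
    rw [hp₂]; cases e₁ <;> simp [gmove]
  have hpair : List.Pairwise (fun y z : X × Bool => y.1.1.length ≤ z.1.1.length) l := by
    have := pairwise_Ln n
    rw [← hl, List.pairwise_map] at this
    exact this
  have hmem : p₂ ∈ l.map Prod.fst := by
    rw [hl]; exact mem_Ln p₂ (by omega)
  have hinv : ∀ q : X, q.1.length = p₂.1.length →
      (∃ y ∈ l, y.1.1.length < p₂.1.length) → q ∈ l.map Prod.fst := by
    intro q hq _
    rw [hl]; exact mem_Ln q (by omega)
  have hwalk := walk l p₂ hpair hmem hinv
  refine ⟨e₀, e₁, act p₂ l, by rw [act_map_fst, hl], ?_⟩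
  rw [← hwalk, ← mul_assoc, ← mul_assoc, hs1, mul_assoc ((if e₀ then Gg false else 1)), hs2,
    ← mul_assoc, mul_assoc]

def stab (n : ℕ) : Subgroup GG where
  carrier := {g | ∀ m ∈ Mset n, g * m ∈ Mset n ∧ g⁻¹ * m ∈ Mset n}
  one_mem' := by simp
  mul_mem' := by
    intro a b ha hb m hm
    constructor
    · rw [mul_assoc]
      exact (ha _ ((hb m hm).1)).1
    · rw [mul_inv_rev, mul_assoc]
      exact (hb _ ((ha m hm).2)).2
  inv_mem' := by
    intro a ha m hm
    exact ⟨(ha m hm).2, by simpa using (ha m hm).1⟩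

def TnSet (n : ℕ) : Set GG := Set.range Gg ∪ {g | ∃ x : X, x.1.length ≤ n ∧ g = Hg x}

lemma TnSet_mono {m n : ℕ} (h : m ≤ n) : TnSet m ⊆ TnSet n := by
  rintro g (hg | ⟨x, hx, rfl⟩)
  · exact Or.inl hg
  · exact Or.inr ⟨x, hx.trans h, rfl⟩

lemma finite_closure_Tn (n : ℕ) :
    ((Subgroup.closure (TnSet n) : Subgroup GG) : Set GG).Finite := by
  have hT : TnSet n ⊆ (stab n : Set GG) := by
    rintro g (⟨j, rfl⟩ | ⟨x, hx, rfl⟩) <;> intro m hm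
    · refine ⟨g_mul_mem j hm, ?_⟩
      rw [inv_eq_of_mul_eq_one_left (Gg_mul_self j)]
      exact g_mul_mem j hm
    · refine ⟨h_mul_mem x hx hm, ?_⟩
      rw [inv_eq_of_mul_eq_one_left (Hg_mul_self x)]
      exact h_mul_mem x hx hm
  have hclos : Subgroup.closure (TnSet n) ≤ stab n := (Subgroup.closure_le _).2 hT
  refine (finite_Mset n).subset ?_
  intro g hg
  have := (hclos hg 1 (one_mem_Mset n)).1
  simpa using this

lemma exists_level (g : GG) : ∃ n, g ∈ Subgroup.closure (TnSet n) := by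
  induction g using PresentedGroup.induction_on with
  | H z =>
    induction z using FreeGroup.induction_on with
    | C1 => exact ⟨0, by simpa using Subgroup.one_mem _⟩
    | of x =>
      cases x with
      | inl x =>
        exact ⟨x.1.length, Subgroup.subset_closure (Or.inr ⟨x, le_refl _, rfl⟩)⟩
      | inr j =>
        exact ⟨0, Subgroup.subset_closure (Or.inl ⟨j, rfl⟩)⟩
    | inv_of x hx =>
      obtain ⟨n, hn⟩ := hx
      exact ⟨n, by rw [map_inv]; exact Subgroup.inv_mem _ hn⟩
    | mul a b ha hb =>
      obtain ⟨n₁, hn₁⟩ := ha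
      obtain ⟨n₂, hn₂⟩ := hb
      refine ⟨max n₁ n₂, ?_⟩
      rw [map_mul]
      exact Subgroup.mul_mem _
        (Subgroup.closure_mono (TnSet_mono (le_max_left n₁ n₂)) hn₁)
        (Subgroup.closure_mono (TnSet_mono (le_max_right n₁ n₂)) hn₂)

theorem locally_finite (s : Finset GG) :
    ((Subgroup.closure (s : Set GG) : Subgroup GG) : Set GG).Finite := by
  classical
  set N := s.attach.sup fun g => Classical.choose (exists_level g.1) with hN
  have hsub : (s : Set GG) ⊆ (Subgroup.closure (TnSet N) : Subgroup GG) := by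
    intro g hg
    have hspec := Classical.choose_spec (exists_level g)
    refine Subgroup.closure_mono (TnSet_mono ?_) hspec
    exact Finset.le_sup (f := fun g : {x // x ∈ s} => Classical.choose (exists_level g.1))
      (Finset.mem_attach s ⟨g, hg⟩)
  have := (Subgroup.closure_le _).2 hsub
  exact (finite_closure_Tn N).subset this

end LF
namespace LF

section Amen

open scoped Classical

variable {G : Type*} [Group G]

/-- The (finite) subgroup generated by a finite set, as a `Finset`. -/
noncomputable def kfin (hLF : ∀ s : Finset G,
    ((Subgroup.closure (s : Set G) : Subgroup G) : Set G).Finite) (F : Finset G) : Finset G :=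
  (hLF F).toFinset

open Classical in
noncomputable def mfun (hLF : ∀ s : Finset G,
    ((Subgroup.closure (s : Set G) : Subgroup G) : Set G).Finite)
    (F : Finset G) (A : Set G) : ℝ :=
  (∑ x ∈ kfin hLF F, if x ∈ A then (1 : ℝ) else 0) / (kfin hLF F).card

variable (hLF : ∀ s : Finset G, ((Subgroup.closure (s : Set G) : Subgroup G) : Set G).Finite)

lemma mem_kfin {F : Finset G} {x : G} :
    x ∈ kfin hLF F ↔ x ∈ Subgroup.closure (F : Set G) := by
  simp [kfin, Set.Finite.mem_toFinset]

lemma kfin_card_pos (F : Finset G) : 0 < (kfin hLF F).card := by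
  refine Finset.card_pos.2 ⟨1, ?_⟩
  rw [mem_kfin]
  exact Subgroup.one_mem _

lemma mfun_nonneg (F : Finset G) (A : Set G) : 0 ≤ mfun hLF F A := by
  unfold mfun
  refine div_nonneg (Finset.sum_nonneg fun x _ => ?_) (by positivity)
  split <;> norm_num

lemma mfun_le_one (F : Finset G) (A : Set G) : mfun hLF F A ≤ 1 := by
  unfold mfun
  rw [div_le_one (by exact_mod_cast kfin_card_pos hLF F)]
  calc (∑ x ∈ kfin hLF F, if x ∈ A then (1 : ℝ) else 0)
      ≤ ∑ _x ∈ kfin hLF F, (1 : ℝ) := by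
        refine Finset.sum_le_sum fun x _ => ?_
        split <;> norm_num
    _ = (kfin hLF F).card := by simp

lemma mfun_univ (F : Finset G) : mfun hLF F Set.univ = 1 := by
  unfold mfun
  simp only [Set.mem_univ, if_true, Finset.sum_const, nsmul_eq_mul, mul_one]
  exact div_self (by exact_mod_cast (kfin_card_pos hLF F).ne')

lemma mfun_add (F : Finset G) {A B : Set G} (hAB : Disjoint A B) :
    mfun hLF F (A ∪ B) = mfun hLF F A + mfun hLF F B := by
  unfold mfun
  rw [← add_div]
  congr 1
  rw [← Finset.sum_add_distrib]
  refine Finset.sum_congr rfl fun x _ => ?_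
  by_cases hx1 : x ∈ A
  · have hx2 : x ∉ B := fun hB => Set.disjoint_left.1 hAB hx1 hB
    simp [Set.mem_union, hx1, hx2]
  · by_cases hx2 : x ∈ B <;> simp [Set.mem_union, hx1, hx2]

lemma mfun_inv (F : Finset G) (g : G) (hg : g ∈ F) (A : Set G) :
    mfun hLF F ((g * ·) '' A) = mfun hLF F A := by
  unfold mfun
  congr 1
  have hgmem : g ∈ Subgroup.closure (F : Set G) := Subgroup.subset_closure hg
  have hmap : (kfin hLF F).map (Equiv.mulLeft g).toEmbedding = kfin hLF F := by
    ext b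
    rw [Finset.mem_map_equiv, mem_kfin, mem_kfin]
    constructor
    · intro h
      have : g * ((Equiv.mulLeft g).symm b) ∈ Subgroup.closure (F : Set G) :=
        Subgroup.mul_mem _ hgmem h
      simpa using this
    · intro h
      simp only [Equiv.mulLeft_symm, Equiv.coe_mulLeft]
      exact Subgroup.mul_mem _ (Subgroup.inv_mem _ hgmem) h
  conv_lhs => rw [← hmap]
  rw [Finset.sum_map]
  refine Finset.sum_congr rfl fun a _ => ?_
  have hiff : (Equiv.mulLeft g).toEmbedding a ∈ (g * ·) '' A ↔ a ∈ A := by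
    simp only [Equiv.coe_toEmbedding, Equiv.coe_mulLeft]
    exact (mul_right_injective g).mem_set_image
  by_cases ha : a ∈ A
  · rw [if_pos (hiff.2 ha), if_pos ha]
  · rw [if_neg (fun hc => ha (hiff.1 hc)), if_neg ha]

theorem isAmenable_of_locallyFinite (hLF : ∀ s : Finset G,
    ((Subgroup.closure (s : Set G) : Subgroup G) : Set G).Finite) : IsAmenable G := by
  classical
  let U : Ultrafilter (Finset G) := Ultrafilter.of Filter.atTop
  have hU : (U : Filter (Finset G)) ≤ Filter.atTop := Ultrafilter.of_le _
  have hA : ∀ A : Set G, ∃ r, r ∈ Set.Icc (0 : ℝ) 1 ∧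
      Filter.Tendsto (fun F => mfun hLF F A) (U : Filter (Finset G)) (nhds r) := by
    intro A
    have hle : (Ultrafilter.map (fun F => mfun hLF F A) U : Filter ℝ) ≤
        Filter.principal (Set.Icc (0 : ℝ) 1) := by
      refine Filter.le_principal_iff.2 (Filter.mem_map.2 (Filter.univ_mem' fun F => ?_))
      exact ⟨mfun_nonneg hLF F A, mfun_le_one hLF F A⟩
    obtain ⟨r, hrIcc, hr⟩ := isCompact_Icc.ultrafilter_le_nhds _ hle
    exact ⟨r, hrIcc, hr⟩
  choose μ hμIcc hμlim using hA
  refine ⟨μ, fun A => (hμIcc A).1, ?_, ?_, ?_⟩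
  · have h1 : Filter.Tendsto (fun F => mfun hLF F Set.univ)
        (U : Filter (Finset G)) (nhds 1) := by
      have he : (fun F : Finset G => mfun hLF F Set.univ) = fun _ => (1 : ℝ) :=
        funext fun F => mfun_univ hLF F
      rw [he]
      exact tendsto_const_nhds
    exact tendsto_nhds_unique (hμlim Set.univ) h1
  · intro A B hAB
    refine tendsto_nhds_unique (hμlim (A ∪ B)) ?_
    refine ((hμlim A).add (hμlim B)).congr fun F => ?_
    exact (mfun_add hLF F hAB).symm
  · intro g A
    refine tendsto_nhds_unique (hμlim ((g * ·) '' A)) ?_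
    refine (hμlim A).congr' ?_
    have hmem : {F : Finset G | g ∈ F} ∈ (U : Filter (Finset G)) := by
      apply hU
      have h2 : {F : Finset G | {g} ≤ F} ∈ (Filter.atTop : Filter (Finset G)) :=
        Filter.mem_atTop {g}
      refine Filter.mem_of_superset h2 fun F hF => ?_
      exact Finset.singleton_subset_iff.1 hF
    refine Filter.eventuallyEq_of_mem hmem fun F hF => ?_
    exact (mfun_inv hLF F g hF A).symm

end Amen

end LF

/-- The group `G` generated by the involutions `g₀, g₁` and the elements
`h(x)`, `x ∈ X`, subject to the relations (R1)–(R3) and the `g`-relations, is locally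
finite: every finitely generated subgroup is finite. In particular `G` is amenable. -/
theorem stmt_16 :
    (∀ s : Finset (PresentedGroup relsG),
      ((Subgroup.closure (s : Set (PresentedGroup relsG))
          : Subgroup (PresentedGroup relsG)) : Set (PresentedGroup relsG)).Finite) ∧
    IsAmenable (PresentedGroup relsG) := by
  exact ⟨LF.locally_finite, LF.isAmenable_of_locallyFinite LF.locally_finite⟩
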